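/- Let P ∈ ℕ and let M be a d×d submatrix of the Gabor matrix G(c) described by the vector ℓ = (ℓ₀,…,ℓ_{P−1}) recording the number of columns drawn from each block D_κ W_P (so ∑ℓ_κ = d). Then the number of generalized diagonals of M whose product of entries is a nonzero constant multiple of the lowest-index monomial p_M equals ∏_{κ=0}^{P−1} ℓ_κ!. -/

import Mathlib

open scoped Classical

/-- The lowest-index (LI) monomial of a `d×d` matrix of variables, recorded as a
multiset of variable indices.  `A i j` is the index of the variable `c_{A i j}`
appearing (up to a nonzero constant) in entry `(i,j)`.  Recursively: take the variable
`c_v` of lowest index appearing in the matrix, pick an entry containing it (the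
canonical choice: smallest row, then smallest column -- the result is independent of
this choice), delete that row and column, and recurse: `p_M = c_v · p_{M'}`. -/
noncomputable def LImonomial (P : ℕ) [NeZero P] :
    (d : ℕ) → (Fin d → Fin d → Fin P) → Multiset (Fin P)
  | 0, _ => 0
  | d + 1, A =>
    let v : Fin P :=
      ((Finset.univ.image fun p : Fin (d + 1) × Fin (d + 1) => A p.1 p.2).min).untopD 0
    let i : Fin (d + 1) :=
      ((Finset.univ.filter fun i => ∃ j, A i j = v).min).untopD 0
    let j : Fin (d + 1) :=
      ((Finset.univ.filter fun j => A i j = v).min).untopD 0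
    v ::ₘ LImonomial P d (fun i' j' => A (i.succAbove i') (j.succAbove j'))

namespace LIaux

open Finset Equiv

variable {P : ℕ} [NeZero P]

/-- The multiset of entries along the generalized diagonal given by `π`. -/
noncomputable def diag {d : ℕ} (A : Fin d → Fin d → Fin P) (π : Equiv.Perm (Fin d)) :
    Multiset (Fin P) :=
  Finset.univ.val.map fun j => A (π j) j

/-- The minimal variable index appearing in the matrix. -/
noncomputable def LIv {d : ℕ} (A : Fin (d + 1) → Fin (d + 1) → Fin P) : Fin P :=
  ((Finset.univ.image fun p : Fin (d + 1) × Fin (d + 1) => A p.1 p.2).min).untopD 0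

/-- The first row containing the minimal variable. -/
noncomputable def LIi {d : ℕ} (A : Fin (d + 1) → Fin (d + 1) → Fin P) : Fin (d + 1) :=
  ((Finset.univ.filter fun i => ∃ j, A i j = LIv A).min).untopD 0

/-- The first column of row `LIi` containing the minimal variable. -/
noncomputable def LIj {d : ℕ} (A : Fin (d + 1) → Fin (d + 1) → Fin P) : Fin (d + 1) :=
  ((Finset.univ.filter fun j => A (LIi A) j = LIv A).min).untopD 0

/-- The submatrix obtained by deleting row `LIi` and column `LIj`. -/
noncomputable def sub {d : ℕ} (A : Fin (d + 1) → Fin (d + 1) → Fin P) :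
    Fin d → Fin d → Fin P :=
  fun i' j' => A ((LIi A).succAbove i') ((LIj A).succAbove j')

lemma LImonomial_zero (A : Fin 0 → Fin 0 → Fin P) : LImonomial P 0 A = 0 := rfl

lemma LImonomial_succ {d : ℕ} (A : Fin (d + 1) → Fin (d + 1) → Fin P) :
    LImonomial P (d + 1) A = LIv A ::ₘ LImonomial P d (sub A) := rfl

lemma untop'_min_mem {α : Type*} [LinearOrder α] {s : Finset α} (hs : s.Nonempty)
    (x : α) : s.min.untopD x ∈ s := by
  rw [← Finset.coe_min' hs, WithTop.untopD_coe]
  exact Finset.min'_mem _ _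

lemma untop'_min_le {α : Type*} [LinearOrder α] {s : Finset α} {a : α} (h : a ∈ s)
    (x : α) : s.min.untopD x ≤ a := by
  have hs : s.Nonempty := ⟨a, h⟩
  rw [← Finset.coe_min' hs, WithTop.untopD_coe]
  exact Finset.min'_le _ _ h

lemma LIv_le {d : ℕ} (A : Fin (d + 1) → Fin (d + 1) → Fin P) (i j : Fin (d + 1)) :
    LIv A ≤ A i j :=
  untop'_min_le (Finset.mem_image.2 ⟨(i, j), Finset.mem_univ _, rfl⟩) 0

lemma LIi_spec {d : ℕ} (A : Fin (d + 1) → Fin (d + 1) → Fin P) :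
    ∃ j, A (LIi A) j = LIv A := by
  have hvmem : LIv A ∈ Finset.univ.image fun p : Fin (d + 1) × Fin (d + 1) => A p.1 p.2 :=
    untop'_min_mem ⟨A 0 0, Finset.mem_image.2 ⟨(0, 0), Finset.mem_univ _, rfl⟩⟩ 0
  obtain ⟨p, -, hp⟩ := Finset.mem_image.1 hvmem
  have hne : (Finset.univ.filter fun i => ∃ j, A i j = LIv A).Nonempty :=
    ⟨p.1, Finset.mem_filter.2 ⟨Finset.mem_univ _, p.2, hp⟩⟩
  have hmem : LIi A ∈ Finset.univ.filter fun i => ∃ j, A i j = LIv A :=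
    untop'_min_mem hne 0
  exact (Finset.mem_filter.1 hmem).2

lemma LIj_spec {d : ℕ} (A : Fin (d + 1) → Fin (d + 1) → Fin P) :
    A (LIi A) (LIj A) = LIv A := by
  obtain ⟨j, hj⟩ := LIi_spec A
  have hne : (Finset.univ.filter fun j => A (LIi A) j = LIv A).Nonempty :=
    ⟨j, Finset.mem_filter.2 ⟨Finset.mem_univ _, hj⟩⟩
  have hmem : LIj A ∈ Finset.univ.filter fun j => A (LIi A) j = LIv A :=
    untop'_min_mem hne 0
  exact (Finset.mem_filter.1 hmem).2

/-- Decomposing the diagonal multiset along a distinguished row/column pair. -/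
lemma diag_succ {d : ℕ} (A : Fin (d + 1) → Fin (d + 1) → Fin P)
    (π : Equiv.Perm (Fin (d + 1))) (σ : Equiv.Perm (Fin d)) (i₀ j₀ : Fin (d + 1))
    (hπ : π j₀ = i₀) (hs : ∀ j, π (j₀.succAbove j) = i₀.succAbove (σ j)) :
    diag A π = A i₀ j₀ ::ₘ
      diag (fun i' j' => A (i₀.succAbove i') (j₀.succAbove j')) σ := by
  unfold diag
  rw [Fin.univ_succAbove d j₀, Finset.cons_val, Multiset.map_cons, hπ, Finset.map_val,
    Multiset.map_map]
  congr 1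
  apply Multiset.map_congr rfl
  intro j _
  simp only [Function.comp_apply, Fin.succAboveEmb_apply, hs j]

/-- The diagonal multiset is invariant under precomposition with a
column-class-preserving permutation. -/
lemma diag_comp {d : ℕ} (r f : Fin d → Fin P) (A : Fin d → Fin d → Fin P)
    (hA : ∀ i j, A i j = r i - f j) (π σ : Equiv.Perm (Fin d))
    (hσ : ∀ j, f (σ j) = f j) : diag A (π * σ) = diag A π := by
  unfold diag
  have h1 : ∀ j ∈ (Finset.univ.val : Multiset (Fin d)),
      A ((π * σ) j) j = ((fun j => A (π j) j) ∘ σ) j := by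
    intro j _
    simp only [Equiv.Perm.mul_apply, Function.comp_apply, hA, hσ j]
  calc Multiset.map (fun j => A ((π * σ) j) j) Finset.univ.val
      = Multiset.map ((fun j => A (π j) j) ∘ σ) Finset.univ.val :=
        Multiset.map_congr rfl h1
    _ = Multiset.map (fun j => A (π j) j) (Finset.univ.val.map σ) :=
        (Multiset.map_map _ _ _).symm
    _ = Multiset.map (fun j => A (π j) j) Finset.univ.val := by
        rw [Multiset.map_univ_val_equiv σ]

/-- The multiplicity of a lower bound `v` in the LI monomial equals the number of rows
containing an entry equal to `v`. -/
lemma count_LI : ∀ (d : ℕ) (A : Fin d → Fin d → Fin P),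
    (∀ (j : Fin d) (i i' : Fin d), A i j = A i' j → i = i') → ∀ v : Fin P,
    (∀ i j, v ≤ A i j) →
    (LImonomial P d A).count v = (Finset.univ.filter fun i => ∃ j, A i j = v).card
  | 0, A, _, v, _ => by simp [LImonomial_zero]
  | d + 1, A, hinj, v, hv => by
    have hsubinj : ∀ (j : Fin d) (i i' : Fin d), sub A i j = sub A i' j → i = i' := by
      intro j i i' h
      exact Fin.succAbove_right_injective (hinj _ _ _ h)
    have hsubv : ∀ i j, v ≤ sub A i j := fun i j => hv _ _
    have IH := count_LI d (sub A) hsubinj v hsubv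
    rw [LImonomial_succ]
    by_cases hveq : v = LIv A
    · subst hveq
      rw [Multiset.count_cons_self, IH]
      -- It remains to relate the two row sets.
      have hmemi : LIi A ∈ Finset.univ.filter fun i => ∃ j, A i j = LIv A :=
        Finset.mem_filter.2 ⟨Finset.mem_univ _, LIj A, LIj_spec A⟩
      have hcard : (Finset.univ.filter fun i : Fin d => ∃ j, sub A i j = LIv A).card
          = ((Finset.univ.filter fun i => ∃ j, A i j = LIv A).erase (LIi A)).card := by
        apply Finset.card_bij (fun i' _ => (LIi A).succAbove i')
        · intro i' hi'
          obtain ⟨j', hj'⟩ := (Finset.mem_filter.1 hi').2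
          refine Finset.mem_erase.2 ⟨Fin.succAbove_ne _ _, Finset.mem_filter.2
            ⟨Finset.mem_univ _, (LIj A).succAbove j', hj'⟩⟩
        · intro a _ b _ h
          exact Fin.succAbove_right_injective h
        · intro i hi
          obtain ⟨hne, hi⟩ := Finset.mem_erase.1 hi
          obtain ⟨j, hj⟩ := (Finset.mem_filter.1 hi).2
          have hjne : j ≠ LIj A := by
            rintro rfl
            exact hne (hinj _ _ _ (hj.trans (LIj_spec A).symm))
          obtain ⟨j', hj'⟩ := Fin.exists_succAbove_eq hjne
          obtain ⟨i', hi'⟩ := Fin.exists_succAbove_eq hne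
          refine ⟨i', Finset.mem_filter.2 ⟨Finset.mem_univ _, j', ?_⟩, hi'⟩
          show A ((LIi A).succAbove i') ((LIj A).succAbove j') = LIv A
          rw [hi', hj']; exact hj
      rw [hcard, Finset.card_erase_add_one hmemi]
    · rw [Multiset.count_cons_of_ne hveq, IH]
      have hlt : ∀ i j, A i j ≠ v := by
        intro i j h
        have h1 : v ≤ LIv A := by rw [← LIj_spec A]; exact hv _ _
        have h2 : LIv A ≤ v := h ▸ LIv_le A i j
        exact hveq (le_antisymm h1 h2)
      rw [Finset.filter_false_of_mem (fun i _ => by rintro ⟨j, hj⟩; exact hlt _ _ hj),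
        Finset.filter_false_of_mem (fun i _ => by rintro ⟨j, hj⟩; exact hlt _ _ hj)]
      rfl

/-- In any diagonal realizing the LI monomial, the distinguished row `LIi A` must be
matched to a column carrying the minimal variable. -/
lemma forced {d : ℕ} (r f : Fin (d + 1) → Fin P) (hr : Function.Injective r)
    (A : Fin (d + 1) → Fin (d + 1) → Fin P) (hA : ∀ i j, A i j = r i - f j)
    (π : Equiv.Perm (Fin (d + 1))) (h : diag A π = LImonomial P (d + 1) A) :
    A (LIi A) (π⁻¹ (LIi A)) = LIv A := by
  have hinj : ∀ (j : Fin (d + 1)) (i i' : Fin (d + 1)), A i j = A i' j → i = i' := by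
    intro j i i' hh
    rw [hA, hA] at hh
    apply hr
    have := congrArg (· + f j) hh
    simpa [sub_add_cancel] using this
  have hcount := count_LI (d + 1) A hinj (LIv A) (LIv_le A)
  have h1 : (diag A π).count (LIv A)
      = (Finset.univ.filter fun j => LIv A = A (π j) j).card := by
    rw [diag, Multiset.count_map]
    rfl
  have h2 : (Finset.univ.filter fun j => LIv A = A (π j) j).card
      = (Finset.univ.filter fun i => A i (π⁻¹ i) = LIv A).card := by
    apply Finset.card_bij (fun j _ => π j)
    · intro j hj
      refine Finset.mem_filter.2 ⟨Finset.mem_univ _, ?_⟩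
      rw [Equiv.Perm.inv_def π, Equiv.symm_apply_apply]
      exact ((Finset.mem_filter.1 hj).2).symm
    · intro a _ b _ hab
      exact π.injective hab
    · intro i hi
      refine ⟨π⁻¹ i, Finset.mem_filter.2 ⟨Finset.mem_univ _, ?_⟩, π.apply_symm_apply i⟩
      rw [Equiv.Perm.inv_def π, π.apply_symm_apply]
      exact ((Finset.mem_filter.1 hi).2).symm
  have hsub : (Finset.univ.filter fun i => A i (π⁻¹ i) = LIv A)
      ⊆ (Finset.univ.filter fun i => ∃ j, A i j = LIv A) := by
    intro i hi
    exact Finset.mem_filter.2 ⟨Finset.mem_univ _, π⁻¹ i, (Finset.mem_filter.1 hi).2⟩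
  have hle : (Finset.univ.filter fun i => ∃ j, A i j = LIv A).card
      ≤ (Finset.univ.filter fun i => A i (π⁻¹ i) = LIv A).card := by
    rw [← hcount, ← h, h1, h2]
  have heq := Finset.eq_of_subset_of_card_le hsub hle
  have hmem : LIi A ∈ Finset.univ.filter fun i => ∃ j, A i j = LIv A :=
    Finset.mem_filter.2 ⟨Finset.mem_univ _, LIj A, LIj_spec A⟩
  rw [← heq] at hmem
  exact (Finset.mem_filter.1 hmem).2

/-- Normal form: any permutation realizing the LI monomial can be reduced to one on the
submatrix, keeping track of column classes. -/
lemma normalize {d : ℕ} (r f : Fin (d + 1) → Fin P) (hr : Function.Injective r)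
    (A : Fin (d + 1) → Fin (d + 1) → Fin P) (hA : ∀ i j, A i j = r i - f j)
    (π : Equiv.Perm (Fin (d + 1))) (h : diag A π = LImonomial P (d + 1) A) :
    ∃ σ : Equiv.Perm (Fin d),
      diag (sub A) σ = LImonomial P d (sub A) ∧
      f (π⁻¹ (LIi A)) = f (LIj A) ∧
      ∀ i', f (π⁻¹ ((LIi A).succAbove i')) = f ((LIj A).succAbove (σ⁻¹ i')) := by
  have hforced : A (LIi A) (π⁻¹ (LIi A)) = LIv A := forced r f hr A hA π h
  set j₁ := π⁻¹ (LIi A) with hj₁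
  have hfj : f j₁ = f (LIj A) := by
    have h1 : r (LIi A) - f j₁ = r (LIi A) - f (LIj A) := by
      rw [← hA, ← hA, hforced, LIj_spec A]
    have := congrArg (fun x => r (LIi A) - x) h1
    simpa [sub_sub_cancel] using this
  have hswapf : ∀ j, f (Equiv.swap (LIj A) j₁ j) = f j := by
    intro j
    rcases eq_or_ne j (LIj A) with rfl | h1
    · rw [Equiv.swap_apply_left, hfj]
    rcases eq_or_ne j j₁ with rfl | h2
    · rw [Equiv.swap_apply_right, hfj]
    · rw [Equiv.swap_apply_of_ne_of_ne h1 h2]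
  set πs := π * Equiv.swap (LIj A) j₁ with hπs
  have hdiag : diag A πs = LImonomial P (d + 1) A := by
    rw [hπs, diag_comp r f A hA π _ hswapf]; exact h
  have hπs0 : πs (LIj A) = LIi A := by
    rw [hπs, Equiv.Perm.mul_apply, Equiv.swap_apply_left, hj₁, Equiv.Perm.inv_def π, π.apply_symm_apply]
  set e : Option (Fin d) ≃ Option (Fin d) :=
    ((finSuccEquiv' (LIj A)).symm.trans (πs : Equiv.Perm (Fin (d + 1)))).trans
      (finSuccEquiv' (LIi A)) with he
  have hen : e none = none := by
    simp only [he, Equiv.trans_apply, finSuccEquiv'_symm_none, hπs0, finSuccEquiv'_at]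
  set σ := e.removeNone with hσdef
  have hes : ∀ j, πs ((LIj A).succAbove j) = (LIi A).succAbove (σ j) := by
    intro j
    have h1 : e (some j) ≠ none := by
      intro hcon
      exact Option.some_ne_none j (e.injective (hcon.trans hen.symm))
    obtain ⟨y, hy⟩ := Option.ne_none_iff_exists'.1 h1
    have h2 : some (σ j) = e (some j) := Equiv.removeNone_some e ⟨y, hy⟩
    have h3 : e (some j) = finSuccEquiv' (LIi A) (πs ((LIj A).succAbove j)) := by
      simp only [he, Equiv.trans_apply, finSuccEquiv'_symm_some]
    rw [h3] at h2
    have h4 := congrArg (finSuccEquiv' (LIi A)).symm h2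
    rw [Equiv.symm_apply_apply, finSuccEquiv'_symm_some] at h4
    exact h4.symm
  have hd2 : diag A πs = A (LIi A) (LIj A) ::ₘ diag (sub A) σ :=
    diag_succ A πs σ (LIi A) (LIj A) hπs0 hes
  have hLId : diag (sub A) σ = LImonomial P d (sub A) := by
    have h5 : A (LIi A) (LIj A) ::ₘ diag (sub A) σ = LIv A ::ₘ LImonomial P d (sub A) := by
      rw [← hd2, hdiag, LImonomial_succ]
    rw [LIj_spec A] at h5
    exact (Multiset.cons_inj_right (LIv A)).1 h5
  have hinvrel : ∀ x, π⁻¹ x = Equiv.swap (LIj A) j₁ (πs⁻¹ x) := by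
    intro x
    rw [hπs, mul_inv_rev, Equiv.Perm.mul_apply, Equiv.swap_inv, Equiv.swap_apply_self]
  refine ⟨σ, hLId, hfj, fun i' => ?_⟩
  have h6 : πs⁻¹ ((LIi A).succAbove i') = (LIj A).succAbove (σ⁻¹ i') := by
    apply πs.injective
    rw [Equiv.Perm.inv_def πs, πs.apply_symm_apply, hes (σ⁻¹ i'), Equiv.Perm.inv_def σ, σ.apply_symm_apply]
  rw [hinvrel, h6, hswapf]

/-- Uniqueness of the class partition realizing the LI monomial. -/
lemma partition_unique : ∀ (d : ℕ) (r f : Fin d → Fin P), Function.Injective r →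
    ∀ A : Fin d → Fin d → Fin P, (∀ i j, A i j = r i - f j) →
    ∀ π π' : Equiv.Perm (Fin d), diag A π = LImonomial P d A →
    diag A π' = LImonomial P d A → ∀ i, f (π⁻¹ i) = f (π'⁻¹ i)
  | 0, _, _, _, _, _, _, _, _, _, i => i.elim0
  | d + 1, r, f, hr, A, hA, π, π', h, h', i => by
    obtain ⟨σ, hσd, hσ0, hσs⟩ := normalize r f hr A hA π h
    obtain ⟨σ', hσd', hσ0', hσs'⟩ := normalize r f hr A hA π' h'
    by_cases hi : i = LIi A
    · subst hi
      rw [hσ0, hσ0']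
    · obtain ⟨i', rfl⟩ := Fin.exists_succAbove_eq hi
      rw [hσs i', hσs' i']
      have hr' : Function.Injective (r ∘ (LIi A).succAbove) :=
        hr.comp Fin.succAbove_right_injective
      have hA' : ∀ i j, sub A i j
          = (r ∘ (LIi A).succAbove) i - (f ∘ (LIj A).succAbove) j := by
        intro i j
        exact hA _ _
      exact partition_unique d (r ∘ (LIi A).succAbove) (f ∘ (LIj A).succAbove) hr'
        (sub A) hA' σ σ' hσd hσd' i'

/-- Existence: some generalized diagonal realizes the LI monomial. -/
lemma exists_diag_eq : ∀ (d : ℕ) (A : Fin d → Fin d → Fin P),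
    ∃ π : Equiv.Perm (Fin d), diag A π = LImonomial P d A
  | 0, A => ⟨1, rfl⟩
  | d + 1, A => by
    obtain ⟨σ, hσ⟩ := exists_diag_eq d (sub A)
    set π : Equiv.Perm (Fin (d + 1)) :=
      ((finSuccEquiv' (LIj A)).trans (Equiv.optionCongr σ)).trans
        (finSuccEquiv' (LIi A)).symm with hπ
    have h1 : π (LIj A) = LIi A := by
      simp only [hπ, Equiv.trans_apply, finSuccEquiv'_at, Equiv.optionCongr_apply,
        Option.map_none, finSuccEquiv'_symm_none]
    have h2 : ∀ j, π ((LIj A).succAbove j) = (LIi A).succAbove (σ j) := by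
      intro j
      simp only [hπ, Equiv.trans_apply, finSuccEquiv'_succAbove, Equiv.optionCongr_apply,
        Option.map_some, finSuccEquiv'_symm_some]
    refine ⟨π, ?_⟩
    rw [diag_succ A π σ (LIi A) (LIj A) h1 h2, LIj_spec A, LImonomial_succ]
    exact congrArg (Multiset.cons (LIv A)) hσ

/-- Cardinality of the subgroup of permutations preserving the fibers of `f`. -/
lemma card_stab (d : ℕ) (f : Fin d → Fin P) :
    (Finset.univ.filter fun σ : Equiv.Perm (Fin d) => ∀ j, f (σ j) = f j).card
      = ∏ κ : Fin P, Nat.factorial (Finset.univ.filter fun j => f j = κ).card := by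
  classical
  have congr_fiber : ∀ (g : ∀ κ : Fin P, Equiv.Perm {j : Fin d // f j = κ})
      {κ κ' : Fin P} (h : κ = κ') (j : Fin d) (hj : f j = κ),
      ((g κ) ⟨j, hj⟩).1 = ((g κ') ⟨j, h ▸ hj⟩).1 := by
    intro g κ κ' h j hj
    subst h
    rfl
  -- the combining map
  have key : ∀ g : ∀ κ : Fin P, Equiv.Perm {j : Fin d // f j = κ},
      Function.Bijective (fun j : Fin d => ((g (f j)) ⟨j, rfl⟩ : {x // f x = f j}).1) := by
    intro g
    constructor
    · intro a b hab
      have hab' : ((g (f a)) ⟨a, rfl⟩).1 = ((g (f b)) ⟨b, rfl⟩).1 := hab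
      have hfa : f ((g (f a)) ⟨a, rfl⟩).1 = f a := ((g (f a)) ⟨a, rfl⟩).2
      have hfb : f ((g (f b)) ⟨b, rfl⟩).1 = f b := ((g (f b)) ⟨b, rfl⟩).2
      have hf : f a = f b := by rw [← hfa, ← hfb, hab']
      have h1 : ((g (f b)) ⟨b, rfl⟩).1 = ((g (f a)) ⟨b, hf.symm ▸ rfl⟩).1 :=
        congr_fiber g hf.symm b rfl
      have h2 : ((g (f a)) ⟨a, rfl⟩ : {x // f x = f a})
          = (g (f a)) ⟨b, hf.symm ▸ rfl⟩ := Subtype.ext (hab'.trans h1)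
      have h3 := (g (f a)).injective h2
      exact congrArg Subtype.val h3
    · intro i
      set x := (g (f i)).symm ⟨i, rfl⟩ with hx
      refine ⟨x.1, ?_⟩
      show ((g (f x.1)) ⟨x.1, rfl⟩).1 = i
      refine (congr_fiber g x.2 x.1 rfl).trans ?_
      show ((g (f i)) x).1 = i
      rw [hx, Equiv.apply_symm_apply]
  have hEbij : Function.Bijective
      (fun g : ∀ κ : Fin P, Equiv.Perm {j : Fin d // f j = κ} =>
        (⟨Equiv.ofBijective _ (key g), fun j =>
          ((g (f j)) ⟨j, rfl⟩).2⟩ :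
          {σ : Equiv.Perm (Fin d) // ∀ j, f (σ j) = f j})) := by
    constructor
    · intro g g' hgg'
      have happ : ∀ j : Fin d, ((g (f j)) ⟨j, rfl⟩).1 = ((g' (f j)) ⟨j, rfl⟩).1 := by
        intro j
        have := congrArg (fun s => (s.1 : Equiv.Perm (Fin d)) j) hgg'
        simpa [Equiv.ofBijective] using this
      funext κ
      apply Equiv.ext
      rintro ⟨j, hj⟩
      apply Subtype.ext
      have h1 := congr_fiber g hj j rfl
      have h2 := congr_fiber g' hj j rfl
      calc ((g κ) ⟨j, hj⟩).1 = ((g (f j)) ⟨j, rfl⟩).1 := by rw [← h1]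
        _ = ((g' (f j)) ⟨j, rfl⟩).1 := happ j
        _ = ((g' κ) ⟨j, hj⟩).1 := by rw [h2]
    · rintro ⟨σ, hσ⟩
      refine ⟨fun κ => σ.subtypePerm (fun j => ?_), ?_⟩
      · constructor
        · intro hj; rw [hσ j] at hj; exact hj
        · intro hj; rw [hσ j]; exact hj
      · apply Subtype.ext
        apply Equiv.ext
        intro j
        rfl
  have hcard1 : (Finset.univ.filter fun σ : Equiv.Perm (Fin d) => ∀ j, f (σ j) = f j).card
      = Fintype.card {σ : Equiv.Perm (Fin d) // ∀ j, f (σ j) = f j} :=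
    (Fintype.card_subtype _).symm
  rw [hcard1, ← Fintype.card_congr (Equiv.ofBijective _ hEbij), Fintype.card_pi]
  apply Finset.prod_congr rfl
  intro κ _
  rw [Fintype.card_perm, Fintype.card_subtype]

end LIaux

/-- Let `M` be a `d×d` submatrix of the Gabor matrix `G(c)`, with rows
`r : Fin d → Fin P` and columns `col : Fin d → Fin P × Fin P` (so entry `(i,j)` is a
nonzero constant times `c_{r i − (col j).1}`), and let `ℓ_κ` be the number of columns
drawn from the block `D_κ W_P`.  Then the number of generalized diagonals of `M`
(i.e. permutations `π` of `Fin d`) whose product of entries is a nonzero constant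
multiple of the LI monomial `p_M` equals `∏_κ ℓ_κ!`. -/
theorem li_monomial_diagonal_count (P : ℕ) [NeZero P] (d : ℕ)
    (r : Fin d → Fin P) (hr : Function.Injective r)
    (col : Fin d → Fin P × Fin P) (hcol : Function.Injective col)
    (A : Fin d → Fin d → Fin P) (hA : ∀ i j, A i j = r i - (col j).1) :
    (Finset.univ.filter fun π : Equiv.Perm (Fin d) =>
        (Finset.univ.val.map fun j : Fin d => A (π j) j) = LImonomial P d A).card
      = ∏ κ : Fin P,
          Nat.factorial (Finset.univ.filter fun j : Fin d => (col j).1 = κ).card := by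
  classical
  set f : Fin d → Fin P := fun j => (col j).1 with hf
  obtain ⟨π₀, hπ₀⟩ := LIaux.exists_diag_eq (P := P) d A
  have himage : (Finset.univ.filter fun π : Equiv.Perm (Fin d) =>
        (Finset.univ.val.map fun j : Fin d => A (π j) j) = LImonomial P d A)
      = (Finset.univ.filter fun σ : Equiv.Perm (Fin d) => ∀ j, f (σ j) = f j).image
          (fun σ => π₀ * σ) := by
    ext π
    simp only [Finset.mem_filter, Finset.mem_image, Finset.mem_univ, true_and]
    constructor
    · intro h
      refine ⟨π₀⁻¹ * π, ⟨fun j => ?_, by group⟩⟩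
      have hu := LIaux.partition_unique d r f hr A hA π π₀ h hπ₀ (π j)
      rw [Equiv.Perm.inv_def π, Equiv.symm_apply_apply] at hu
      calc f ((π₀⁻¹ * π) j) = f (π₀⁻¹ (π j)) := rfl
        _ = f j := hu.symm
    · rintro ⟨σ, hσ, rfl⟩
      have := LIaux.diag_comp r f A hA π₀ σ hσ
      rw [LIaux.diag, LIaux.diag] at this
      rw [this]
      exact hπ₀
  rw [himage, Finset.card_image_of_injective _ (mul_right_injective π₀),
    LIaux.card_stab d f]
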